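/- Every connected cubic graph that is not isomorphic to the complete graph K4 and not isomorphic to the complete bipartite graph K_{3,3} contains at least one cracker whose size is at most the girth of the graph. -/

import Mathlib

open SimpleGraph

/-- A graph is cubic if every vertex has exactly three neighbours. -/
def IsCubic {V : Type*} (G : SimpleGraph V) : Prop :=
  ∀ v : V, (G.neighborSet v).ncard = 3

/-- A cracker of `G`: a nonempty set of edges of `G`, no two of which share a
vertex, whose deletion disconnects `G`, while no proper subset disconnects `G`. -/
def IsCracker {V : Type*} (G : SimpleGraph V) (C : Set (Sym2 V)) : Prop :=
  C.Nonempty ∧ C ⊆ G.edgeSet ∧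
    C.Pairwise (fun e f => ∀ v : V, ¬(v ∈ e ∧ v ∈ f)) ∧
    ¬(G.deleteEdges C).Connected ∧
    ∀ C' : Set (Sym2 V), C' ⊂ C → (G.deleteEdges C').Connected

/-- A `k`-cracker is a cracker consisting of `k` edges. -/
def IsKCracker {V : Type*} (G : SimpleGraph V) (C : Set (Sym2 V)) (k : ℕ) : Prop :=
  IsCracker G C ∧ C.ncard = k

section CrackerAux

variable {V : Type*} {G : SimpleGraph V}

/-- The set of edges crossing `S`. -/
def xcut (G : SimpleGraph V) (S : Set V) : Set (Sym2 V) :=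
  {e | ∃ x y, G.Adj x y ∧ x ∈ S ∧ y ∉ S ∧ e = s(x, y)}

lemma xcut_subset_edgeSet (S : Set V) : xcut G S ⊆ G.edgeSet := by
  rintro e ⟨x, y, h, -, -, rfl⟩; exact h

lemma xcut_disconnects {S : Set V} {s t : V} (hs : s ∈ S) (ht : t ∉ S) :
    ¬ (G.deleteEdges (xcut G S)).Connected := by
  intro h
  obtain ⟨p⟩ := h.preconnected s t
  obtain ⟨d, _, h1, h2⟩ := p.exists_boundary_dart S hs ht
  have hadj := d.adj
  rw [deleteEdges_adj] at hadj
  exact hadj.2 ⟨d.toProd.1, d.toProd.2, hadj.1, h1, h2, rfl⟩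


lemma extract_cracker [Fintype V] (hG : G.Connected) :
    ∀ (n : ℕ) (D : Set (Sym2 V)), D.ncard ≤ n → D ⊆ G.edgeSet →
      D.Pairwise (fun e f => ∀ v : V, ¬(v ∈ e ∧ v ∈ f)) →
      ¬(G.deleteEdges D).Connected → ∃ C, C ⊆ D ∧ IsCracker G C := by
  intro n
  induction n with
  | zero =>
    intro D hcard _ _ hdis
    rw [Nat.le_zero, Set.ncard_eq_zero (Set.toFinite D)] at hcard
    subst hcard
    rw [deleteEdges_empty] at hdis
    exact absurd hG hdis
  | succ n ih =>
    intro D hcard hsub hpair hdis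
    by_cases hex : ∃ C', C' ⊂ D ∧ ¬(G.deleteEdges C').Connected
    · obtain ⟨C', hss, hd⟩ := hex
      have hlt : C'.ncard < D.ncard := Set.ncard_lt_ncard hss (Set.toFinite D)
      obtain ⟨C, hC1, hC2⟩ := ih C' (by omega) (hss.subset.trans hsub)
        (hpair.mono hss.subset) hd
      exact ⟨C, hC1.trans hss.subset, hC2⟩
    · push_neg at hex
      refine ⟨D, subset_rfl, ?_, hsub, hpair, hdis, fun C' h => hex C' h⟩
      rcases D.eq_empty_or_nonempty with rfl | hne
      · rw [deleteEdges_empty] at hdis; exact absurd hG hdis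
      · exact hne

lemma closed_eq_univ (hG : G.Connected) {S : Set V} {s : V}
    (hcl : ∀ x ∈ S, ∀ y, G.Adj x y → y ∈ S) (hs : s ∈ S) : ∀ t, t ∈ S := by
  intro t
  obtain ⟨p⟩ := hG.preconnected s t
  clear hG
  induction p with
  | nil => exact hs
  | cons h q ih => exact ih (hcl _ hs _ h)

lemma third_nbr (hcub : IsCubic G) {x u z : V} (hxu : G.Adj x u) (hxz : G.Adj x z)
    (huz : u ≠ z) : ∃ t, G.Adj x t ∧ t ≠ u ∧ t ≠ z := by
  obtain ⟨p, q, r, hpq, hpr, hqr, hN⟩ := Set.ncard_eq_three.mp (hcub x)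
  have hu : u ∈ ({p, q, r} : Set V) := hN ▸ hxu
  have hz : z ∈ ({p, q, r} : Set V) := hN ▸ hxz
  have hp : p ∈ G.neighborSet x := by rw [hN]; simp
  have hq : q ∈ G.neighborSet x := by rw [hN]; simp
  have hr : r ∈ G.neighborSet x := by rw [hN]; simp
  simp only [Set.mem_insert_iff, Set.mem_singleton_iff] at hu hz
  rcases hu with rfl | rfl | rfl <;> rcases hz with rfl | rfl | rfl <;>
    first
      | exact absurd rfl huz
      | exact ⟨r, hr, hpr.symm.symm, hqr.symm.symm⟩
      | exact ⟨r, hr, (by tauto), (by tauto)⟩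
      | exact ⟨q, hq, (by tauto), (by tauto)⟩
      | exact ⟨p, hp, (by tauto), (by tauto)⟩

lemma nbr_class [Finite V] (hcub : IsCubic G) {x u z t : V} (hxu : G.Adj x u) (hxz : G.Adj x z)
    (hxt : G.Adj x t) (huz : u ≠ z) (hut : u ≠ t) (hzt : z ≠ t) :
    ∀ y, G.Adj x y → y = u ∨ y = z ∨ y = t := by
  have hsub : ({u, z, t} : Set V) ⊆ G.neighborSet x := by
    rintro y (rfl | rfl | rfl) <;> assumption
  have hcard : (G.neighborSet x).ncard ≤ ({u, z, t} : Set V).ncard := by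
    rw [hcub x]
    rw [Set.ncard_insert_of_notMem (by simp [hut, huz]) (Set.toFinite _),
      Set.ncard_insert_of_notMem (by simp [hzt]) (Set.toFinite _), Set.ncard_singleton]
  have := Set.eq_of_subset_of_ncard_le hsub hcard (Set.toFinite _)
  intro y hy
  have : y ∈ ({u, z, t} : Set V) := this ▸ hy
  simpa using this

open SimpleGraph
open SimpleGraph.Walk

variable {V : Type*} {G : SimpleGraph V}

lemma length_rotate [DecidableEq V] {v : V} (c : G.Walk v v) {u : V} (h : u ∈ c.support) :
    (c.rotate u h).length = c.length := by
  have := congr_arg Walk.length (c.take_spec h)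
  rw [length_append] at this
  rw [Walk.rotate, length_append]
  omega

lemma mem_support_iff_mem_tail {v : V} (c : G.Walk v v) (hc : ¬ c.Nil) (x : V) :
    x ∈ c.support ↔ x ∈ c.support.tail := by
  obtain ⟨u, h, q, rfl⟩ := not_nil_iff.mp hc
  simp only [support_cons, List.tail_cons, List.mem_cons]
  constructor
  · rintro (rfl | h)
    · exact q.end_mem_support
    · exact h
  · exact fun h => Or.inr h

lemma mem_support_rotate_iff [DecidableEq V] {v u : V} (c : G.Walk v v) (hc : c.IsCycle)
    (h : u ∈ c.support) (x : V) : x ∈ (c.rotate u h).support ↔ x ∈ c.support := by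
  have h1 := support_rotate c u h
  have hnr : ¬ (c.rotate u h).Nil := (hc.rotate h).not_nil
  rw [mem_support_iff_mem_tail _ hnr, mem_support_iff_mem_tail _ hc.not_nil, h1.mem_iff]

/-- A cycle based at `x` gives two distinct neighbours of `x` on the cycle,
through which all cycle edges at `x` pass. -/
lemma cycle_nbrs [DecidableEq V] {x : V} {c : G.Walk x x} (hc : c.IsCycle) :
    ∃ u z, u ≠ z ∧ G.Adj x u ∧ G.Adj x z ∧ u ∈ c.support ∧ z ∈ c.support ∧
      (∀ e ∈ c.edges, x ∈ e → e = s(x, u) ∨ e = s(x, z)) := by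
  obtain ⟨u, h, q, rfl⟩ := not_nil_iff.mp hc.not_nil
  obtain ⟨hq, hxu⟩ := (cons_isCycle_iff q h).mp hc
  have hq3 : 2 ≤ q.length := by
    have := hc.three_le_length
    simp only [length_cons] at this; omega
  have hqnil : ¬ q.reverse.Nil := by
    rw [nil_iff_length_eq, length_reverse]; omega
  obtain ⟨z, h2, r, hrev⟩ := not_nil_iff.mp hqnil
  have hrp : q.reverse.IsPath := hq.reverse
  rw [hrev] at hrp
  obtain ⟨hr, hxr⟩ := (cons_isPath_iff h2 r).mp hrp
  have hxz_mem : s(x, z) ∈ q.edges := by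
    rw [← List.mem_reverse, ← edges_reverse, hrev]
    exact List.mem_cons_self
  have huz : u ≠ z := by
    rintro rfl
    exact hxu hxz_mem
  have hzsup : z ∈ q.support := by
    have : z ∈ q.reverse.support := by rw [hrev]; simp
    rwa [support_reverse, List.mem_reverse] at this
  refine ⟨u, z, huz, h, h2, ?_, ?_, ?_⟩
  · simp
  · simp [List.mem_cons_of_mem, hzsup]
  · intro e he hxe
    rw [edges_cons, List.mem_cons] at he
    rcases he with rfl | he
    · exact Or.inl rfl
    · right
      obtain ⟨y, rfl⟩ : ∃ y, e = s(x, y) := Sym2.mem_iff_exists.mp hxe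
      have : s(x, y) ∈ q.reverse.edges := by rwa [edges_reverse, List.mem_reverse]
      rw [hrev, edges_cons, List.mem_cons] at this
      rcases this with heq | hmem
      · rw [Sym2.congr_right.mp (heq.symm ▸ rfl : s(x,y) = s(x,z))]
      · exact absurd (Walk.fst_mem_support_of_mem_edges r hmem) hxr
variable {V : Type*} {G : SimpleGraph V} [DecidableEq V]

section MinCycle

variable {a : V} {w : G.Walk a a}

/-- In a shortest cycle, any edge between two support vertices is a cycle edge. -/
lemma chord_mem_edges (hw : w.IsCycle)
    (hmin : ∀ (u : V) (c : G.Walk u u), c.IsCycle → w.length ≤ c.length)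
    {x y : V} (hx : x ∈ w.support) (hy : y ∈ w.support)
    (hadj : G.Adj x y) : s(x, y) ∈ w.edges := by
  by_contra hne
  have hcyc : (w.rotate x hx).IsCycle := hw.rotate hx
  have hlen : (w.rotate x hx).length = w.length := length_rotate w hx
  have hecn : s(x, y) ∉ (w.rotate x hx).edges := fun h => hne ((rotate_edges w x hx).mem_iff.mp h)
  have hyc : y ∈ (w.rotate x hx).support := (mem_support_rotate_iff w hw hx y).mpr hy
  obtain ⟨u, h, q, hq⟩ := not_nil_iff.mp hcyc.not_nil
  rw [hq] at hcyc hlen hecn hyc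
  obtain ⟨hqp, hxu⟩ := (cons_isCycle_iff q h).mp hcyc
  have hyx : y ≠ x := hadj.ne'
  have hyq : y ∈ q.support := by
    rcases List.mem_cons.mp (by simpa using hyc) with rfl | hmem
    · exact absurd rfl hyx
    · exact hmem
  by_cases hyu : y = u
  · subst hyu
    exact hecn (by simp)
  · have hd : (q.dropUntil y hyq).IsPath := hqp.dropUntil hyq
    have hnewc : (Walk.cons hadj (q.dropUntil y hyq)).IsCycle := by
      rw [cons_isCycle_iff]
      refine ⟨hd, fun hmem => hecn ?_⟩
      rw [edges_cons]
      exact List.mem_cons_of_mem _ (q.edges_dropUntil_subset hyq hmem)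
    have hlen2 := hmin _ _ hnewc
    rw [length_cons] at hlen2
    have hts := congr_arg Walk.length (q.take_spec hyq)
    rw [length_append] at hts
    have htn : ¬ (q.takeUntil y hyq).Nil := not_nil_of_ne (Ne.symm hyu)
    rw [nil_iff_length_eq] at htn
    rw [length_cons] at hlen
    have h3 := hw.three_le_length
    omega

/-- In a shortest cycle of length ≥ 5, two distinct support vertices cannot have a
common neighbour outside the support. -/
lemma no_common_outside (hw : w.IsCycle)
    (hmin : ∀ (u : V) (c : G.Walk u u), c.IsCycle → w.length ≤ c.length)
    (hg5 : 5 ≤ w.length) {x y v : V} (hx : x ∈ w.support) (hy : y ∈ w.support)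
    (hxy : x ≠ y) (hv : v ∉ w.support) (h1 : G.Adj x v) (h2 : G.Adj y v) : False := by
  have hcyc : (w.rotate x hx).IsCycle := hw.rotate hx
  have hlen : (w.rotate x hx).length = w.length := length_rotate w hx
  have hyc : y ∈ (w.rotate x hx).support := (mem_support_rotate_iff w hw hx y).mpr hy
  have hvc : v ∉ (w.rotate x hx).support := fun hm => hv ((mem_support_rotate_iff w hw hx v).mp hm)
  obtain ⟨u, h, q, hq⟩ := not_nil_iff.mp hcyc.not_nil
  rw [hq] at hcyc hlen hyc hvc
  obtain ⟨hqp, hxu⟩ := (cons_isCycle_iff q h).mp hcyc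
  have hyq : y ∈ q.support := by
    rcases List.mem_cons.mp (by simpa using hyc) with rfl | hmem
    · exact absurd rfl (Ne.symm hxy)
    · exact hmem
  have hvq : v ∉ q.support := fun hm => hvc (by simp [hm])
  have hvx : v ≠ x := fun he => hvc (by simp [he])
  set t := q.takeUntil y hyq with htdef
  set d := q.dropUntil y hyq with hddef
  have hdp : d.IsPath := hqp.dropUntil hyq
  have htp : t.IsPath := hqp.takeUntil hyq
  have hts := congr_arg Walk.length (q.take_spec hyq)
  rw [length_append] at hts
  have hvd : v ∉ d.support := fun hm => hvq (q.support_dropUntil_subset hyq hm)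
  have hvt : v ∉ t.support := fun hm => hvq (q.support_takeUntil_subset hyq hm)
  -- x is not in t.support
  have hxt : x ∉ t.support := by
    have hsupq : q.support = t.support ++ d.support.tail := by
      conv_lhs => rw [← q.take_spec hyq]
      exact support_append t d
    have hnd : q.support.Nodup := hqp.support_nodup
    rw [hsupq, List.nodup_append] at hnd
    intro hxt
    refine hnd.2.2 x hxt x ?_ rfl
    have hxd : x ∈ d.support := d.end_mem_support
    rw [support_eq_cons, List.mem_cons] at hxd
    rcases hxd with rfl | hm
    · exact absurd rfl hxy
    · exact hm
  -- first cycle : x - v - y - (d) - x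
  have hc1 : (Walk.cons h1 (Walk.cons h2.symm d)).IsCycle := by
    rw [cons_isCycle_iff]
    constructor
    · rw [cons_isPath_iff]
      exact ⟨hdp, hvd⟩
    · rw [edges_cons, List.mem_cons]
      rintro (heq | hmem)
      · rcases Sym2.eq_iff.mp heq with ⟨ha', hb'⟩ | ⟨ha', hb'⟩
        · exact hvx ha'.symm
        · exact hxy ha'
      · exact hvd (Walk.snd_mem_support_of_mem_edges d hmem)
  -- second cycle : y - v - x - (t.reverse from x) ... i.e. cons h2 (cons h1.symm (cons h t))
  have hc2 : (Walk.cons h2 (Walk.cons h1.symm (Walk.cons h t))).IsCycle := by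
    rw [cons_isCycle_iff]
    constructor
    · rw [cons_isPath_iff, cons_isPath_iff, support_cons, List.mem_cons]
      refine ⟨⟨htp, hxt⟩, ?_⟩
      push_neg
      exact ⟨hvx, hvt⟩
    · rw [edges_cons, edges_cons, List.mem_cons, List.mem_cons]
      rintro (heq | heq | hmem)
      · rcases Sym2.eq_iff.mp heq with ⟨ha', hb'⟩ | ⟨ha', hb'⟩
        · exact h2.ne ha'
        · exact hxy ha'.symm
      · rcases Sym2.eq_iff.mp heq with ⟨ha', hb'⟩ | ⟨ha', hb'⟩
        · exact hxy ha'.symm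
        · exact hvx hb'
      · exact hvt (Walk.snd_mem_support_of_mem_edges t hmem)
  rw [← htdef, ← hddef] at hts
  have hl1 := hmin _ _ hc1
  have hl2 := hmin _ _ hc2
  simp only [length_cons] at hl1 hl2 hlen
  omega

end MinCycle

open SimpleGraph

variable {V : Type*} {G : SimpleGraph V}

lemma build_K4 {a b c v : V}
    (hab : G.Adj a b) (hbc : G.Adj b c) (hca : G.Adj c a)
    (hav : G.Adj a v) (hbv : G.Adj b v) (hcv : G.Adj c v)
    (huniv : ∀ t : V, t = a ∨ t = b ∨ t = c ∨ t = v) :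
    Nonempty (G ≃g completeGraph (Fin 4)) := by
  have hne : _ ∧ _ ∧ _ ∧ _ ∧ _ ∧ _ :=
    ⟨hab.ne, hbc.ne, hca.ne, hav.ne, hbv.ne, hcv.ne⟩
  obtain ⟨h1, h2, h3, h4, h5, h6⟩ := hne
  let f : Fin 4 → V := ![a, b, c, v]
  have hinj : Function.Injective f := by
    intro i j hij
    fin_cases i <;> fin_cases j <;> simp_all [f] <;>
      first | rfl | exact absurd hij (by tauto) | exact absurd hij.symm (by tauto)
  have hsurj : Function.Surjective f := by
    intro x
    rcases huniv x with rfl | rfl | rfl | rfl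
    exacts [⟨0, rfl⟩, ⟨1, rfl⟩, ⟨2, rfl⟩, ⟨3, rfl⟩]
  let e : Fin 4 ≃ V := Equiv.ofBijective f ⟨hinj, hsurj⟩
  refine ⟨(SimpleGraph.Iso.symm ⟨e, ?_⟩ : G ≃g completeGraph (Fin 4))⟩
  intro i j
  show G.Adj (f i) (f j) ↔ (completeGraph (Fin 4)).Adj i j
  constructor
  · intro h
    simp only [completeGraph, top_adj]
    intro hij; subst hij; exact G.irrefl h
  · intro h
    simp only [completeGraph, top_adj] at h
    fin_cases i <;> fin_cases j <;>
      first
        | exact absurd rfl h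
        | simpa [f] using hab | simpa [f] using hab.symm
        | simpa [f] using hbc | simpa [f] using hbc.symm
        | simpa [f] using hca | simpa [f] using hca.symm
        | simpa [f] using hav | simpa [f] using hav.symm
        | simpa [f] using hbv | simpa [f] using hbv.symm
        | simpa [f] using hcv | simpa [f] using hcv.symm

open SimpleGraph

variable {V : Type*} {G : SimpleGraph V}

/-- parts {a,c,u} and {b,d,v}; all cross adjacencies, no within-part adjacencies -/
lemma build_K33 {a c u b d v : V}
    (hab : G.Adj a b) (had : G.Adj a d) (hav : G.Adj a v)
    (hcb : G.Adj c b) (hcd : G.Adj c d) (hcv : G.Adj c v)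
    (hub : G.Adj u b) (hud : G.Adj u d) (huv : G.Adj u v)
    (nac : ¬ G.Adj a c) (nau : ¬ G.Adj a u) (ncu : ¬ G.Adj c u)
    (nbd : ¬ G.Adj b d) (nbv : ¬ G.Adj b v) (ndv : ¬ G.Adj d v)
    (hac : a ≠ c) (hau : a ≠ u) (hcu : c ≠ u)
    (hbd : b ≠ d) (hbv : b ≠ v) (hdv : d ≠ v)
    (huniv : ∀ t : V, t = a ∨ t = c ∨ t = u ∨ t = b ∨ t = d ∨ t = v) :
    Nonempty (G ≃g completeBipartiteGraph (Fin 3) (Fin 3)) := by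
  have h1 := hab.ne; have h2 := had.ne; have h3 := hav.ne
  have h4 := hcb.ne; have h5 := hcd.ne; have h6 := hcv.ne
  have h7 := hub.ne; have h8 := hud.ne; have h9 := huv.ne
  let f : Fin 3 ⊕ Fin 3 → V := Sum.elim ![a, c, u] ![b, d, v]
  have hinj : Function.Injective f := by
    rintro (i | i) (j | j) hij <;>
      fin_cases i <;> fin_cases j <;>
        simp_all [f] <;>
          first
            | rfl
            | exact absurd hij (by tauto)
            | exact absurd hij.symm (by tauto)
  have hsurj : Function.Surjective f := by
    intro x
    rcases huniv x with rfl | rfl | rfl | rfl | rfl | rfl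
    exacts [⟨.inl 0, rfl⟩, ⟨.inl 1, rfl⟩, ⟨.inl 2, rfl⟩,
      ⟨.inr 0, rfl⟩, ⟨.inr 1, rfl⟩, ⟨.inr 2, rfl⟩]
  let e : Fin 3 ⊕ Fin 3 ≃ V := Equiv.ofBijective f ⟨hinj, hsurj⟩
  refine ⟨(SimpleGraph.Iso.symm ⟨e, ?_⟩ : G ≃g completeBipartiteGraph (Fin 3) (Fin 3))⟩
  intro x y
  show G.Adj (f x) (f y) ↔ (completeBipartiteGraph (Fin 3) (Fin 3)).Adj x y
  rcases x with (i | i) <;> rcases y with (j | j) <;> fin_cases i <;> fin_cases j <;>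
    simp [f] <;>
    first
      | assumption
      | exact G.irrefl
      | exact hab.symm | exact had.symm | exact hav.symm
      | exact hcb.symm | exact hcd.symm | exact hcv.symm
      | exact hub.symm | exact hud.symm | exact huv.symm
      | exact fun h => nac h.symm | exact fun h => nau h.symm | exact fun h => ncu h.symm
      | exact fun h => nbd h.symm | exact fun h => nbv h.symm | exact fun h => ndv h.symm

section Small
open SimpleGraph Walk
variable {V : Type*} {G : SimpleGraph V}

lemma pair_disj {x1 y1 x2 y2 : V} (h1 : x1 ≠ x2) (h2 : x1 ≠ y2) (h3 : y1 ≠ x2)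
    (h4 : y1 ≠ y2) : ∀ v : V, ¬(v ∈ s(x1, y1) ∧ v ∈ s(x2, y2)) := by
  rintro v ⟨hv1, hv2⟩
  rcases Sym2.mem_iff.mp hv1 with rfl | rfl <;> rcases Sym2.mem_iff.mp hv2 with h | h <;>
    tauto

abbrev EDisj (e f : Sym2 V) : Prop := ∀ v : V, ¬(v ∈ e ∧ v ∈ f)

lemma edisj_symm {e f : Sym2 V} (h : EDisj e f) : EDisj f e :=
  fun v hv => h v ⟨hv.2, hv.1⟩

lemma pairwise_one (e1 : Sym2 V) :
    ({e1} : Set (Sym2 V)).Pairwise (fun e f => ∀ v : V, ¬(v ∈ e ∧ v ∈ f)) :=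
  Set.pairwise_singleton _ _

lemma pairwise_two {e1 e2 : Sym2 V} (h12 : EDisj e1 e2) :
    ({e1, e2} : Set (Sym2 V)).Pairwise (fun e f => ∀ v : V, ¬(v ∈ e ∧ v ∈ f)) := by
  rintro x (rfl | rfl) y (rfl | rfl) hne <;>
    first | exact absurd rfl hne | exact h12 | exact edisj_symm h12

lemma pairwise_three {e1 e2 e3 : Sym2 V} (h12 : EDisj e1 e2) (h13 : EDisj e1 e3)
    (h23 : EDisj e2 e3) :
    ({e1, e2, e3} : Set (Sym2 V)).Pairwise (fun e f => ∀ v : V, ¬(v ∈ e ∧ v ∈ f)) := by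
  rintro x (rfl | rfl | rfl) y (rfl | rfl | rfl) hne <;>
    first
      | exact absurd rfl hne
      | assumption
      | exact edisj_symm h12
      | exact edisj_symm h13
      | exact edisj_symm h23

lemma pairwise_four {e1 e2 e3 e4 : Sym2 V} (h12 : EDisj e1 e2) (h13 : EDisj e1 e3)
    (h14 : EDisj e1 e4) (h23 : EDisj e2 e3) (h24 : EDisj e2 e4) (h34 : EDisj e3 e4) :
    ({e1, e2, e3, e4} : Set (Sym2 V)).Pairwise (fun e f => ∀ v : V, ¬(v ∈ e ∧ v ∈ f)) := by
  rintro x (rfl | rfl | rfl | rfl) y (rfl | rfl | rfl | rfl) hne <;>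
    first
      | exact absurd rfl hne
      | assumption
      | exact edisj_symm h12
      | exact edisj_symm h13
      | exact edisj_symm h14
      | exact edisj_symm h23
      | exact edisj_symm h24
      | exact edisj_symm h34

lemma ncard_pair_le (e1 e2 : Sym2 V) : ({e1, e2} : Set (Sym2 V)).ncard ≤ 2 :=
  le_trans (Set.ncard_insert_le _ _) (by simp [Set.ncard_singleton])

lemma ncard_three_le (e1 e2 e3 : Sym2 V) : ({e1, e2, e3} : Set (Sym2 V)).ncard ≤ 3 :=
  le_trans (Set.ncard_insert_le _ _) (by
    have := ncard_pair_le e2 e3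
    omega)

lemma ncard_four_le (e1 e2 e3 e4 : Sym2 V) : ({e1, e2, e3, e4} : Set (Sym2 V)).ncard ≤ 4 :=
  le_trans (Set.ncard_insert_le _ _) (by
    have := ncard_three_le e2 e3 e4
    omega)

end Small

section G3
open SimpleGraph Walk
variable {V : Type*} {G : SimpleGraph V} [Finite V]

/-- the common existence statement -/
def CutGood (G : SimpleGraph V) (n : ℕ) : Prop :=
  ∃ (S : Set V) (s t : V), s ∈ S ∧ t ∉ S ∧
    (xcut G S).Pairwise (fun e f => ∀ v : V, ¬(v ∈ e ∧ v ∈ f)) ∧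
    (xcut G S).ncard ≤ n

lemma cutgood_of_subset_one {S : Set V} {s t : V} {e1 : Sym2 V} {n : ℕ}
    (hs : s ∈ S) (ht : t ∉ S) (hsub : xcut G S ⊆ {e1}) (hn : 1 ≤ n) :
    CutGood G n := by
  refine ⟨S, s, t, hs, ht, Set.Pairwise.mono hsub (pairwise_one e1), ?_⟩
  calc (xcut G S).ncard ≤ ({e1} : Set (Sym2 V)).ncard :=
        Set.ncard_le_ncard hsub (Set.toFinite _)
    _ = 1 := Set.ncard_singleton e1
    _ ≤ n := hn

lemma cutgood_of_subset_two {S : Set V} {s t : V} {e1 e2 : Sym2 V} {n : ℕ}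
    (hs : s ∈ S) (ht : t ∉ S) (hsub : xcut G S ⊆ {e1, e2}) (h12 : EDisj e1 e2)
    (hn : 2 ≤ n) : CutGood G n := by
  refine ⟨S, s, t, hs, ht, Set.Pairwise.mono hsub (pairwise_two h12), ?_⟩
  calc (xcut G S).ncard ≤ ({e1, e2} : Set (Sym2 V)).ncard :=
        Set.ncard_le_ncard hsub (Set.toFinite _)
    _ ≤ 2 := ncard_pair_le e1 e2
    _ ≤ n := hn

lemma cutgood_of_subset_three {S : Set V} {s t : V} {e1 e2 e3 : Sym2 V} {n : ℕ}
    (hs : s ∈ S) (ht : t ∉ S) (hsub : xcut G S ⊆ {e1, e2, e3})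
    (h12 : EDisj e1 e2) (h13 : EDisj e1 e3) (h23 : EDisj e2 e3)
    (hn : 3 ≤ n) : CutGood G n := by
  refine ⟨S, s, t, hs, ht, Set.Pairwise.mono hsub (pairwise_three h12 h13 h23), ?_⟩
  calc (xcut G S).ncard ≤ ({e1, e2, e3} : Set (Sym2 V)).ncard :=
        Set.ncard_le_ncard hsub (Set.toFinite _)
    _ ≤ 3 := ncard_three_le e1 e2 e3
    _ ≤ n := hn

lemma cutgood_of_subset_four {S : Set V} {s t : V} {e1 e2 e3 e4 : Sym2 V}
    (hs : s ∈ S) (ht : t ∉ S) (hsub : xcut G S ⊆ {e1, e2, e3, e4})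
    (h12 : EDisj e1 e2) (h13 : EDisj e1 e3) (h14 : EDisj e1 e4)
    (h23 : EDisj e2 e3) (h24 : EDisj e2 e4) (h34 : EDisj e3 e4) :
    CutGood G 4 := by
  refine ⟨S, s, t, hs, ht,
    Set.Pairwise.mono hsub (pairwise_four h12 h13 h14 h23 h24 h34), ?_⟩
  calc (xcut G S).ncard ≤ ({e1, e2, e3, e4} : Set (Sym2 V)).ncard :=
        Set.ncard_le_ncard hsub (Set.toFinite _)
    _ ≤ 4 := ncard_four_le e1 e2 e3 e4


/-- Triangle `a b c` where `a` and `b` share the third neighbour `v`. -/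
lemma tri_shared (hcub : IsCubic G)
    {a b c v c' : V}
    (hab : G.Adj a b) (hbc : G.Adj b c) (hca : G.Adj c a)
    (hav : G.Adj a v) (hbv : G.Adj b v) (hcc' : G.Adj c c')
    (hvc' : c' ≠ v) (hvc : v ≠ c) (hc'a : c' ≠ a) (hc'b : c' ≠ b) :
    CutGood G 3 := by
  have hNa : ∀ y, G.Adj a y → y = b ∨ y = c ∨ y = v :=
    nbr_class hcub hab hca.symm hav hbc.ne hbv.ne hvc.symm
  have hNb : ∀ y, G.Adj b y → y = a ∨ y = c ∨ y = v :=
    nbr_class hcub hab.symm hbc hbv hca.ne.symm hav.ne hvc.symm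
  have hNc : ∀ y, G.Adj c y → y = b ∨ y = a ∨ y = c' :=
    nbr_class hcub hbc.symm hca hcc' hab.ne' hc'b.symm hc'a.symm
  have hva : v ≠ a := hav.ne'
  have hvb : v ≠ b := hbv.ne'
  obtain ⟨w, hvw, hwa, hwb⟩ := third_nbr hcub hav.symm hbv.symm hab.ne
  have hwc : w ≠ c := by
    rintro rfl
    rcases hNc v hvw.symm with h | h | h
    · exact hvb h
    · exact hva h
    · exact hvc' h.symm
  have hwv : w ≠ v := hvw.ne'
  have hNv : ∀ y, G.Adj v y → y = a ∨ y = b ∨ y = w :=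
    nbr_class hcub hav.symm hbv.symm hvw hab.ne hwa.symm hwb.symm
  have hc'c : c' ≠ c := hcc'.ne'
  by_cases hcw : c' = w
  · subst hcw
    obtain ⟨z, hwz, hzv, hzc⟩ := third_nbr hcub hvw.symm hcc'.symm hvc
    have hza : z ≠ a := by
      rintro rfl
      rcases hNa c' hwz.symm with h | h | h
      · exact hwb h
      · exact hwc h
      · exact hwv h
    have hzb : z ≠ b := by
      rintro rfl
      rcases hNb c' hwz.symm with h | h | h
      · exact hwa h
      · exact hwc h
      · exact hwv h
    have hzw : z ≠ c' := hwz.ne'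
    have hNw : ∀ y, G.Adj c' y → y = v ∨ y = c ∨ y = z :=
      nbr_class hcub hvw.symm hcc'.symm hwz hvc hzv.symm hzc.symm
    refine cutgood_of_subset_one (S := {a, b, c, v, c'}) (s := a) (t := z)
      (e1 := s(c', z)) (by simp) (by simp [hza, hzb, hzc, hzv, hzw]) ?_ (by omega)
    rintro e ⟨x, y, hadj, hxS, hyS, rfl⟩
    simp only [Set.mem_insert_iff, Set.mem_singleton_iff] at hxS hyS
    push_neg at hyS
    obtain ⟨hy1, hy2, hy3, hy4, hy5⟩ := hyS
    rcases hxS with rfl | rfl | rfl | rfl | rfl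
    · rcases hNa y hadj with rfl | rfl | rfl
      · exact absurd rfl hy2
      · exact absurd rfl hy3
      · exact absurd rfl hy4
    · rcases hNb y hadj with rfl | rfl | rfl
      · exact absurd rfl hy1
      · exact absurd rfl hy3
      · exact absurd rfl hy4
    · rcases hNc y hadj with rfl | rfl | rfl
      · exact absurd rfl hy2
      · exact absurd rfl hy1
      · exact absurd rfl hy5
    · rcases hNv y hadj with rfl | rfl | rfl
      · exact absurd rfl hy1
      · exact absurd rfl hy2
      · exact absurd rfl hy5
    · rcases hNw y hadj with rfl | rfl | rfl
      · exact absurd rfl hy4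
      · exact absurd rfl hy3
      · rfl
  · refine cutgood_of_subset_two (S := {a, b, c, v}) (s := a) (t := c')
      (e1 := s(c, c')) (e2 := s(v, w)) (by simp) (by simp [hc'a, hc'b, hc'c, hvc'])
      ?_ (pair_disj hvc.symm hwc.symm hvc' hcw) (by omega)
    rintro e ⟨x, y, hadj, hxS, hyS, rfl⟩
    simp only [Set.mem_insert_iff, Set.mem_singleton_iff] at hxS hyS
    push_neg at hyS
    obtain ⟨hy1, hy2, hy3, hy4⟩ := hyS
    rcases hxS with rfl | rfl | rfl | rfl
    · rcases hNa y hadj with rfl | rfl | rfl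
      · exact absurd rfl hy2
      · exact absurd rfl hy3
      · exact absurd rfl hy4
    · rcases hNb y hadj with rfl | rfl | rfl
      · exact absurd rfl hy1
      · exact absurd rfl hy3
      · exact absurd rfl hy4
    · rcases hNc y hadj with rfl | rfl | rfl
      · exact absurd rfl hy2
      · exact absurd rfl hy1
      · exact Or.inl rfl
    · rcases hNv y hadj with rfl | rfl | rfl
      · exact absurd rfl hy1
      · exact absurd rfl hy2
      · exact Or.inr rfl

lemma case_g3 (hcub : IsCubic G) (hG : G.Connected)
    (hK4 : ¬ Nonempty (G ≃g completeGraph (Fin 4)))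
    {a b c : V} (hab : G.Adj a b) (hbc : G.Adj b c) (hca : G.Adj c a) :
    CutGood G 3 := by
  obtain ⟨a', haa', ha'b, ha'c⟩ := third_nbr hcub hab hca.symm hbc.ne
  obtain ⟨b', hbb', hb'a, hb'c⟩ := third_nbr hcub hab.symm hbc hca.ne.symm
  obtain ⟨c', hcc', hc'b, hc'a⟩ := third_nbr hcub hbc.symm hca hab.ne'
  by_cases h1 : a' = b'
  · by_cases h2 : c' = a'
    · -- K4
      have hbv : G.Adj b a' := by rw [h1]; exact hbb'
      have hcv : G.Adj c a' := by rw [h2] at hcc'; exact hcc'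
      have hva : a' ≠ a := haa'.ne'
      have hNa : ∀ y, G.Adj a y → y = b ∨ y = c ∨ y = a' :=
        nbr_class hcub hab hca.symm haa' hbc.ne ha'b.symm ha'c.symm
      have hNb : ∀ y, G.Adj b y → y = a ∨ y = c ∨ y = a' :=
        nbr_class hcub hab.symm hbc hbv hca.ne.symm hva.symm ha'c.symm
      have hNc : ∀ y, G.Adj c y → y = b ∨ y = a ∨ y = a' :=
        nbr_class hcub hbc.symm hca hcv hab.ne' ha'b.symm hva.symm
      have hNv : ∀ y, G.Adj a' y → y = a ∨ y = b ∨ y = c :=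
        nbr_class hcub haa'.symm hbv.symm hcv.symm hab.ne hca.ne.symm hbc.ne
      have hcl : ∀ x ∈ ({a, b, c, a'} : Set V), ∀ y, G.Adj x y →
          y ∈ ({a, b, c, a'} : Set V) := by
        rintro x (rfl | rfl | rfl | rfl) y hy
        · rcases hNa y hy with rfl | rfl | rfl <;> simp
        · rcases hNb y hy with rfl | rfl | rfl <;> simp
        · rcases hNc y hy with rfl | rfl | rfl <;> simp
        · rcases hNv y hy with rfl | rfl | rfl <;> simp
      have huniv := closed_eq_univ hG hcl (show a ∈ ({a, b, c, a'} : Set V) by simp)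
      have huniv' : ∀ t : V, t = a ∨ t = b ∨ t = c ∨ t = a' := by
        intro t
        simpa using huniv t
      exact absurd (build_K4 hab hbc hca haa' hbv hcv huniv') hK4
    · exact tri_shared hcub hab hbc hca haa' (by rw [h1]; exact hbb') hcc' h2 ha'c hc'a hc'b
  · by_cases h2 : b' = c'
    · exact tri_shared hcub hbc hca hab hbb' (by rw [h2]; exact hcc') haa' h1 hb'a ha'b ha'c
    · by_cases h3 : a' = c'
      · exact tri_shared hcub hca hab hbc hcc' (by rw [h3] at haa'; exact haa') hbb'
          h2 hc'b hb'c hb'a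
      · have hNa : ∀ y, G.Adj a y → y = b ∨ y = c ∨ y = a' :=
          nbr_class hcub hab hca.symm haa' hbc.ne ha'b.symm ha'c.symm
        have hNb : ∀ y, G.Adj b y → y = a ∨ y = c ∨ y = b' :=
          nbr_class hcub hab.symm hbc hbb' hca.ne.symm hb'a.symm hb'c.symm
        have hNc : ∀ y, G.Adj c y → y = b ∨ y = a ∨ y = c' :=
          nbr_class hcub hbc.symm hca hcc' hab.ne' hc'b.symm hc'a.symm
        refine cutgood_of_subset_three (S := {a, b, c}) (s := a) (t := a')
          (e1 := s(a, a')) (e2 := s(b, b')) (e3 := s(c, c'))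
          (by simp) (by simp [haa'.ne', ha'b, ha'c]) ?_
          (pair_disj hab.ne hb'a.symm.symm.symm ha'b h1)
          (pair_disj hca.ne' hc'a.symm.symm.symm ha'c h3)
          (pair_disj hbc.ne hc'b.symm.symm.symm hb'c h2)
          (by omega)
        rintro e ⟨x, y, hadj, hxS, hyS, rfl⟩
        simp only [Set.mem_insert_iff, Set.mem_singleton_iff] at hxS hyS
        push_neg at hyS
        obtain ⟨hy1, hy2, hy3⟩ := hyS
        rcases hxS with rfl | rfl | rfl
        · rcases hNa y hadj with rfl | rfl | rfl
          · exact absurd rfl hy2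
          · exact absurd rfl hy3
          · exact Or.inl rfl
        · rcases hNb y hadj with rfl | rfl | rfl
          · exact absurd rfl hy1
          · exact absurd rfl hy3
          · exact Or.inr (Or.inl rfl)
        · rcases hNc y hadj with rfl | rfl | rfl
          · exact absurd rfl hy2
          · exact absurd rfl hy1
          · exact Or.inr (Or.inr rfl)

end G3

section Ge5
open SimpleGraph Walk
variable {V : Type*} {G : SimpleGraph V} [DecidableEq V]

lemma key_nbrs {a : V} {w : G.Walk a a} (hw : w.IsCycle) {x : V} (hx : x ∈ w.support) :
    ∃ u z, u ≠ z ∧ G.Adj x u ∧ G.Adj x z ∧ u ∈ w.support ∧ z ∈ w.support ∧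
      (∀ e ∈ w.edges, x ∈ e → e = s(x, u) ∨ e = s(x, z)) := by
  obtain ⟨u, z, h1, h2, h3, hu, hz, hcl⟩ := cycle_nbrs (hw.rotate hx)
  exact ⟨u, z, h1, h2, h3, (mem_support_rotate_iff w hw hx u).mp hu,
    (mem_support_rotate_iff w hw hx z).mp hz,
    fun e he hxe => hcl e ((rotate_edges w x hx).mem_iff.mpr he) hxe⟩

lemma case_ge5 [Finite V] (hcub : IsCubic G) {a : V} {w : G.Walk a a} (hw : w.IsCycle)
    (hmin : ∀ (u : V) (c : G.Walk u u), c.IsCycle → w.length ≤ c.length)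
    (hg5 : 5 ≤ w.length) :
    ∃ (S : Set V) (s t : V), s ∈ S ∧ t ∉ S ∧
      (xcut G S).Pairwise (fun e f => ∀ v : V, ¬(v ∈ e ∧ v ∈ f)) ∧
      (xcut G S).ncard ≤ w.length := by
  classical
  set S : Set V := {y | y ∈ w.support} with hSdef
  have hmemS : ∀ y, y ∈ S ↔ y ∈ w.support := fun y => Iff.rfl
  -- uniqueness of the outside neighbour
  have huniq : ∀ x ∈ S, ∀ y1 y2, y1 ∉ S → y2 ∉ S → G.Adj x y1 → G.Adj x y2 → y1 = y2 := by
    intro x hx y1 y2 hy1 hy2 ha1 ha2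
    obtain ⟨u, z, huz, hxu, hxz, huS, hzS, -⟩ := key_nbrs hw hx
    have h1 : u ≠ y1 := fun h => hy1 (h ▸ huS)
    have h2 : z ≠ y1 := fun h => hy1 (h ▸ hzS)
    rcases nbr_class hcub hxu hxz ha1 huz h1 h2 y2 ha2 with rfl | rfl | rfl
    · exact absurd huS hy2
    · exact absurd hzS hy2
    · rfl
  -- an outside vertex exists
  have hout : ∃ t, t ∉ S := by
    obtain ⟨u, z, huz, hau, haz, huS, hzS, hcl⟩ := key_nbrs hw w.start_mem_support
    obtain ⟨t, hat, htu, htz⟩ := third_nbr hcub hau haz huz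
    refine ⟨t, fun htS => ?_⟩
    have := chord_mem_edges hw hmin w.start_mem_support htS hat
    rcases hcl _ this (Sym2.mem_mk_left a t) with heq | heq
    · exact htu (Sym2.congr_right.mp heq)
    · exact htz (Sym2.congr_right.mp heq)
  obtain ⟨tt, htt⟩ := hout
  -- representation of cut edges
  have hrep : ∀ e ∈ xcut G S, ∃ x y, G.Adj x y ∧ x ∈ S ∧ y ∉ S ∧ e = s(x, y) :=
    fun e he => he
  refine ⟨S, a, tt, w.start_mem_support, htt, ?_, ?_⟩
  · -- pairwise disjoint
    rintro e1 he1 e2 he2 hne v0 ⟨hv1, hv2⟩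
    obtain ⟨x1, y1, ha1, hx1, hy1, rfl⟩ := hrep e1 he1
    obtain ⟨x2, y2, ha2, hx2, hy2, rfl⟩ := hrep e2 he2
    have hcongr : x1 = x2 → False := by
      rintro rfl
      exact hne (by rw [huniq x1 hx1 y1 y2 hy1 hy2 ha1 ha2])
    rcases Sym2.mem_iff.mp hv1 with rfl | rfl
    · rcases Sym2.mem_iff.mp hv2 with heq | heq
      · exact hcongr heq
      · exact hy2 (heq ▸ hx1)
    · rcases Sym2.mem_iff.mp hv2 with heq | heq
      · exact hy1 (heq ▸ hx2)
      · -- common outside neighbour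
        subst heq
        by_cases hxx : x1 = x2
        · exact hcongr hxx
        · exact no_common_outside hw hmin hg5 hx1 hx2 hxx hy1 ha1 ha2
  · -- cardinality
    have hex : ∀ e ∈ xcut G S, ∃ x, x ∈ S ∧ ∃ y, G.Adj x y ∧ y ∉ S ∧ e = s(x, y) := by
      rintro e ⟨x, y, h1, h2, h3, h4⟩
      exact ⟨x, h2, y, h1, h3, h4⟩
    set f : Sym2 V → V := fun e =>
      if h : ∃ x, x ∈ S ∧ ∃ y, G.Adj x y ∧ y ∉ S ∧ e = s(x, y) then h.choose else a with hfdef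
    have hfmem : ∀ e (he : e ∈ xcut G S), f e ∈ S ∧
        ∃ y, G.Adj (f e) y ∧ y ∉ S ∧ e = s(f e, y) := by
      intro e he
      have h := hex e he
      simp only [hfdef, dif_pos h]
      exact ⟨h.choose_spec.1, h.choose_spec.2⟩
    have hcard : (xcut G S).ncard ≤ S.ncard := by
      apply Set.ncard_le_ncard_of_injOn f (fun e he => (hfmem e he).1)
      · intro e1 he1 e2 he2 hfe
        obtain ⟨hm1, y1, hay1, hyS1, hrep1⟩ := hfmem e1 he1
        obtain ⟨hm2, y2, hay2, hyS2, hrep2⟩ := hfmem e2 he2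
        rw [hrep1, hrep2, hfe]
        rw [huniq (f e2) hm2 y1 y2 hyS1 hyS2 (hfe ▸ hay1) hay2]
    have hScard : S.ncard = w.length := by
      have hSeq : S = ↑w.support.tail.toFinset := by
        ext y
        rw [hmemS, mem_support_iff_mem_tail w hw.not_nil]
        simp
      rw [hSeq, Set.ncard_coe_finset, List.toFinset_card_of_nodup hw.support_nodup]
      have h1 := w.length_support
      have h2 : w.support.tail.length = w.support.length - 1 := by
        simp [List.length_tail]
      omega
    omega

end Ge5

section G4
open SimpleGraph Walk
variable {V : Type*} {G : SimpleGraph V} [Finite V]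

/-- 4-cycle `a b c d` with `a,c` sharing third neighbour `v`, and `w`, the third
neighbour of `v`, equal to `b`'s third neighbour. `d2` is `d`'s third neighbour. -/
lemma four_shared (hcub : IsCubic G) {a b c d v w d2 : V}
    (hab : G.Adj a b) (hbc : G.Adj b c) (hcd : G.Adj c d) (hda : G.Adj d a)
    (hac : a ≠ c) (hbd : b ≠ d)
    (hT : ∀ x y z : V, G.Adj x y → G.Adj y z → G.Adj z x → False)
    (hav : G.Adj a v) (hcv : G.Adj c v) (hvw : G.Adj v w) (hbw : G.Adj b w)
    (hdd2 : G.Adj d d2) (hwd2 : w ≠ d2)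
    (hvb : v ≠ b) (hvd : v ≠ d) (hwa : w ≠ a) (hwc : w ≠ c)
    (hd2a : d2 ≠ a) (hd2c : d2 ≠ c) : CutGood G 4 := by
  have hwb : w ≠ b := hbw.ne'
  have hwd : w ≠ d := fun h => hT v d a (h ▸ hvw) hda hav
  have hwv : w ≠ v := hvw.ne'
  have hd2b : d2 ≠ b := fun h => hT b c d hbc hcd (h ▸ hdd2)
  have hd2v : d2 ≠ v := fun h => hT v d a (h ▸ hdd2).symm hda hav
  have hd2d : d2 ≠ d := hdd2.ne'
  have hNa : ∀ y, G.Adj a y → y = b ∨ y = d ∨ y = v :=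
    nbr_class hcub hab hda.symm hav hbd hvb.symm hvd.symm
  have hNb : ∀ y, G.Adj b y → y = a ∨ y = c ∨ y = w :=
    nbr_class hcub hab.symm hbc hbw hac hwa.symm hwc.symm
  have hNc : ∀ y, G.Adj c y → y = b ∨ y = d ∨ y = v :=
    nbr_class hcub hbc.symm hcd hcv hbd hvb.symm hvd.symm
  have hNd : ∀ y, G.Adj d y → y = c ∨ y = a ∨ y = d2 :=
    nbr_class hcub hcd.symm hda hdd2 hac.symm hd2c.symm hd2a.symm
  have hNv : ∀ y, G.Adj v y → y = a ∨ y = c ∨ y = w :=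
    nbr_class hcub hav.symm hcv.symm hvw hac hwa.symm hwc.symm
  obtain ⟨z, hwz, hzv, hzb⟩ := third_nbr hcub hvw.symm hbw.symm hvb
  have hza : z ≠ a := by
    rintro rfl
    rcases hNa w hwz.symm with h | h | h
    · exact hwb h
    · exact hwd h
    · exact hwv h
  have hzc : z ≠ c := by
    rintro rfl
    rcases hNc w hwz.symm with h | h | h
    · exact hwb h
    · exact hwd h
    · exact hwv h
  have hzd : z ≠ d := by
    rintro rfl
    rcases hNd w hwz.symm with h | h | h
    · exact hwc h
    · exact hwa h
    · exact hwd2 h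
  have hzw : z ≠ w := hwz.ne'
  have hNw : ∀ y, G.Adj w y → y = v ∨ y = b ∨ y = z :=
    nbr_class hcub hvw.symm hbw.symm hwz hvb hzv.symm hzb.symm
  by_cases hd2z : d2 = z
  · -- absorb z as well
    have hzd' : G.Adj z d := by rw [← hd2z]; exact hdd2.symm
    obtain ⟨y0, hzy0, hy0w, hy0d⟩ := third_nbr hcub hwz.symm hzd' hwd
    have hNz : ∀ y, G.Adj z y → y = w ∨ y = d ∨ y = y0 :=
      nbr_class hcub hwz.symm hzd' hzy0 hwd hy0w.symm hy0d.symm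
    have hy0a : y0 ≠ a := by
      rintro rfl
      rcases hNa z hzy0.symm with h | h | h
      · exact hzb h
      · exact hzd h
      · exact hzv h
    have hy0b : y0 ≠ b := by
      rintro rfl
      rcases hNb z hzy0.symm with h | h | h
      · exact hza h
      · exact hzc h
      · exact hzw h
    have hy0c : y0 ≠ c := by
      rintro rfl
      rcases hNc z hzy0.symm with h | h | h
      · exact hzb h
      · exact hzd h
      · exact hzv h
    have hy0v : y0 ≠ v := by
      rintro rfl
      rcases hNv z hzy0.symm with h | h | h
      · exact hza h
      · exact hzc h
      · exact hzw h
    have hy0z : y0 ≠ z := hzy0.ne'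
    refine cutgood_of_subset_one (S := {a, b, c, d, v, w, z}) (s := a) (t := y0)
      (e1 := s(z, y0)) (by simp)
      (by simp [hy0a, hy0b, hy0c, hy0d, hy0v, hy0w, hy0z]) ?_ (by omega)
    rintro e ⟨x, y, hadj, hxS, hyS, rfl⟩
    simp only [Set.mem_insert_iff, Set.mem_singleton_iff] at hxS hyS
    push_neg at hyS
    obtain ⟨hy1, hy2, hy3, hy4, hy5, hy6, hy7⟩ := hyS
    rcases hxS with rfl | rfl | rfl | rfl | rfl | rfl | rfl
    · rcases hNa y hadj with rfl | rfl | rfl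
      · exact absurd rfl hy2
      · exact absurd rfl hy4
      · exact absurd rfl hy5
    · rcases hNb y hadj with rfl | rfl | rfl
      · exact absurd rfl hy1
      · exact absurd rfl hy3
      · exact absurd rfl hy6
    · rcases hNc y hadj with rfl | rfl | rfl
      · exact absurd rfl hy2
      · exact absurd rfl hy4
      · exact absurd rfl hy5
    · rcases hNd y hadj with rfl | rfl | rfl
      · exact absurd rfl hy3
      · exact absurd rfl hy1
      · exact absurd hd2z hy7
    · rcases hNv y hadj with rfl | rfl | rfl
      · exact absurd rfl hy1
      · exact absurd rfl hy3
      · exact absurd rfl hy6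
    · rcases hNw y hadj with rfl | rfl | rfl
      · exact absurd rfl hy5
      · exact absurd rfl hy2
      · exact absurd rfl hy7
    · rcases hNz y hadj with rfl | rfl | rfl
      · exact absurd rfl hy6
      · exact absurd rfl hy4
      · rfl
  · -- stop here
    have hzS : z ∉ ({a, b, c, d, v, w} : Set V) := by
      simp [hza, hzb, hzc, hzd, hzv, hzw]
    refine cutgood_of_subset_two (S := {a, b, c, d, v, w}) (s := a) (t := z)
      (e1 := s(d, d2)) (e2 := s(w, z)) (by simp) hzS ?_
      (pair_disj hwd.symm (fun h => hzd h.symm) hwd2.symm hd2z) (by omega)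
    rintro e ⟨x, y, hadj, hxS, hyS, rfl⟩
    simp only [Set.mem_insert_iff, Set.mem_singleton_iff] at hxS hyS
    push_neg at hyS
    obtain ⟨hy1, hy2, hy3, hy4, hy5, hy6⟩ := hyS
    rcases hxS with rfl | rfl | rfl | rfl | rfl | rfl
    · rcases hNa y hadj with rfl | rfl | rfl
      · exact absurd rfl hy2
      · exact absurd rfl hy4
      · exact absurd rfl hy5
    · rcases hNb y hadj with rfl | rfl | rfl
      · exact absurd rfl hy1
      · exact absurd rfl hy3
      · exact absurd rfl hy6
    · rcases hNc y hadj with rfl | rfl | rfl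
      · exact absurd rfl hy2
      · exact absurd rfl hy4
      · exact absurd rfl hy5
    · rcases hNd y hadj with rfl | rfl | rfl
      · exact absurd rfl hy3
      · exact absurd rfl hy1
      · exact Or.inl rfl
    · rcases hNv y hadj with rfl | rfl | rfl
      · exact absurd rfl hy1
      · exact absurd rfl hy3
      · exact absurd rfl hy6
    · rcases hNw y hadj with rfl | rfl | rfl
      · exact absurd rfl hy5
      · exact absurd rfl hy2
      · exact Or.inr rfl

/-- 4-cycle `a b c d` with `a,c` sharing third neighbour `v`, while the third
neighbours `b2` of `b` and `d2` of `d` are different. -/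
lemma fourcase (hcub : IsCubic G) {a b c d v b2 d2 : V}
    (hab : G.Adj a b) (hbc : G.Adj b c) (hcd : G.Adj c d) (hda : G.Adj d a)
    (hac : a ≠ c) (hbd : b ≠ d)
    (hT : ∀ x y z : V, G.Adj x y → G.Adj y z → G.Adj z x → False)
    (hav : G.Adj a v) (hcv : G.Adj c v)
    (hbb2 : G.Adj b b2) (hdd2 : G.Adj d d2) (hb2d2 : b2 ≠ d2)
    (hvb : v ≠ b) (hvd : v ≠ d)
    (hb2a : b2 ≠ a) (hb2c : b2 ≠ c) (hd2a : d2 ≠ a) (hd2c : d2 ≠ c) :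
    CutGood G 4 := by
  obtain ⟨w, hvw, hwa, hwc⟩ := third_nbr hcub hav.symm hcv.symm hac
  have hwb : w ≠ b := fun h => hT a b v hab (h ▸ hvw).symm hav.symm
  have hwd : w ≠ d := fun h => hT v d a (h ▸ hvw) hda hav
  by_cases hwb2 : w = b2
  · have hbw : G.Adj b w := by rw [hwb2]; exact hbb2
    exact four_shared hcub hab hbc hcd hda hac hbd hT hav hcv hvw hbw hdd2
      (by rw [hwb2]; exact hb2d2) hvb hvd hwa hwc hd2a hd2c
  · by_cases hwd2 : w = d2
    · have hdw : G.Adj d w := by rw [hwd2]; exact hdd2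
      exact four_shared hcub hda.symm hcd.symm hbc.symm hab.symm hac hbd.symm hT
        hav hcv hvw hdw hbb2 (fun h => hwb2 h) hvd hvb hwa hwc hb2a hb2c
    · -- three independent edges
      have hvw' : w ≠ v := hvw.ne'
      have hb2b : b2 ≠ b := hbb2.ne'
      have hb2d : b2 ≠ d := fun h => hT b c d hbc hcd (h ▸ hbb2).symm
      have hb2v : b2 ≠ v := fun h => hT a b v hab (h ▸ hbb2) hav.symm
      have hd2b : d2 ≠ b := fun h => hT b c d hbc hcd (h ▸ hdd2)
      have hd2d : d2 ≠ d := hdd2.ne'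
      have hd2v : d2 ≠ v := fun h => hT v d a (h ▸ hdd2).symm hda hav
      have hwb2' : b2 ≠ w := fun h => hwb2 h.symm
      have hwd2' : d2 ≠ w := fun h => hwd2 h.symm
      have hNa : ∀ y, G.Adj a y → y = b ∨ y = d ∨ y = v :=
        nbr_class hcub hab hda.symm hav hbd hvb.symm hvd.symm
      have hNb : ∀ y, G.Adj b y → y = a ∨ y = c ∨ y = b2 :=
        nbr_class hcub hab.symm hbc hbb2 hac hb2a.symm hb2c.symm
      have hNc : ∀ y, G.Adj c y → y = b ∨ y = d ∨ y = v :=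
        nbr_class hcub hbc.symm hcd hcv hbd hvb.symm hvd.symm
      have hNd : ∀ y, G.Adj d y → y = c ∨ y = a ∨ y = d2 :=
        nbr_class hcub hcd.symm hda hdd2 hac.symm hd2c.symm hd2a.symm
      have hNv : ∀ y, G.Adj v y → y = a ∨ y = c ∨ y = w :=
        nbr_class hcub hav.symm hcv.symm hvw hac hwa.symm hwc.symm
      refine cutgood_of_subset_three (S := {a, b, c, d, v}) (s := a) (t := w)
        (e1 := s(b, b2)) (e2 := s(d, d2)) (e3 := s(v, w))
        (by simp) (by simp [hwa, hwb, hwc, hwd, hvw']) ?_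
        (pair_disj hbd hd2b.symm hb2d hb2d2)
        (pair_disj hvb.symm hwb.symm hb2v hwb2')
        (pair_disj hvd.symm hwd.symm hd2v hwd2')
        (by omega)
      rintro e ⟨x, y, hadj, hxS, hyS, rfl⟩
      simp only [Set.mem_insert_iff, Set.mem_singleton_iff] at hxS hyS
      push_neg at hyS
      obtain ⟨hy1, hy2, hy3, hy4, hy5⟩ := hyS
      rcases hxS with rfl | rfl | rfl | rfl | rfl
      · rcases hNa y hadj with rfl | rfl | rfl
        · exact absurd rfl hy2
        · exact absurd rfl hy4
        · exact absurd rfl hy5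
      · rcases hNb y hadj with rfl | rfl | rfl
        · exact absurd rfl hy1
        · exact absurd rfl hy3
        · exact Or.inl rfl
      · rcases hNc y hadj with rfl | rfl | rfl
        · exact absurd rfl hy2
        · exact absurd rfl hy4
        · exact absurd rfl hy5
      · rcases hNd y hadj with rfl | rfl | rfl
        · exact absurd rfl hy3
        · exact absurd rfl hy1
        · exact Or.inr (Or.inl rfl)
      · rcases hNv y hadj with rfl | rfl | rfl
        · exact absurd rfl hy1
        · exact absurd rfl hy3
        · exact Or.inr (Or.inr rfl)

end G4

section G4M
open SimpleGraph Walk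
variable {V : Type*} {G : SimpleGraph V} [Finite V]

lemma case_g4 (hcub : IsCubic G) (hG : G.Connected)
    (hK33 : ¬ Nonempty (G ≃g completeBipartiteGraph (Fin 3) (Fin 3)))
    {a b c d : V} (hab : G.Adj a b) (hbc : G.Adj b c) (hcd : G.Adj c d)
    (hda : G.Adj d a) (hac : a ≠ c) (hbd : b ≠ d)
    (hT : ∀ x y z : V, G.Adj x y → G.Adj y z → G.Adj z x → False) :
    CutGood G 4 := by
  obtain ⟨a', haa', ha'b, ha'd⟩ := third_nbr hcub hab hda.symm hbd
  obtain ⟨b', hbb', hb'a, hb'c⟩ := third_nbr hcub hab.symm hbc hac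
  obtain ⟨c', hcc', hc'b, hc'd⟩ := third_nbr hcub hbc.symm hcd hbd
  obtain ⟨d', hdd', hd'c, hd'a⟩ := third_nbr hcub hcd.symm hda hac.symm
  have nac : ¬ G.Adj a c := fun h => hT a b c hab hbc h.symm
  have nbd : ¬ G.Adj b d := fun h => hT b c d hbc hcd h.symm
  have ha'c : a' ≠ c := fun h => nac (h ▸ haa')
  have hb'd : b' ≠ d := fun h => nbd (h ▸ hbb')
  have hc'a : c' ≠ a := fun h => nac ((h ▸ hcc') : G.Adj c a).symm
  have hd'b : d' ≠ b := fun h => nbd ((h ▸ hdd') : G.Adj d b).symm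
  by_cases h13 : a' = c'
  · by_cases h24 : b' = d'
    · -- doubly shared: v := a', u := b'
      have hcv : G.Adj c a' := by rw [h13]; exact hcc'
      have hdu : G.Adj d b' := by rw [h24]; exact hdd'
      have hvu : a' ≠ b' := by
        intro h
        have hba' : G.Adj b a' := by rw [h]; exact hbb'
        exact hT a b a' hab hba' haa'.symm
      have nbv : ¬ G.Adj b a' := fun h => hT a b a' hab h haa'.symm
      have ndv : ¬ G.Adj d a' := fun h => hT a' a d haa'.symm hda.symm h
      have nau : ¬ G.Adj a b' := fun h => hT a b' b h hbb'.symm hab.symm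
      have ncu : ¬ G.Adj c b' := fun h => hT c b' b h hbb'.symm hbc
      obtain ⟨w, hvw, hwa, hwc⟩ := third_nbr hcub haa'.symm hcv.symm hac
      have hwb : w ≠ b := fun h => nbv ((h ▸ hvw) : G.Adj a' b).symm
      have hwd : w ≠ d := fun h => ndv ((h ▸ hvw) : G.Adj a' d).symm
      have hNv : ∀ y, G.Adj a' y → y = a ∨ y = c ∨ y = w :=
        nbr_class hcub haa'.symm hcv.symm hvw hac hwa.symm hwc.symm
      have hNa : ∀ y, G.Adj a y → y = b ∨ y = d ∨ y = a' :=
        nbr_class hcub hab hda.symm haa' hbd ha'b.symm ha'd.symm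
      have hNb : ∀ y, G.Adj b y → y = a ∨ y = c ∨ y = b' :=
        nbr_class hcub hab.symm hbc hbb' hac hb'a.symm hb'c.symm
      have hNc : ∀ y, G.Adj c y → y = b ∨ y = d ∨ y = a' :=
        nbr_class hcub hbc.symm hcd hcv hbd ha'b.symm ha'd.symm
      have hNd : ∀ y, G.Adj d y → y = c ∨ y = a ∨ y = b' :=
        nbr_class hcub hcd.symm hda hdu hac.symm hb'c.symm hb'a.symm
      by_cases hwu : w = b'
      · -- K_{3,3}
        have huv : G.Adj a' b' := by rw [← hwu]; exact hvw
        have hcl : ∀ x ∈ ({a, b, c, d, b', a'} : Set V), ∀ y, G.Adj x y →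
            y ∈ ({a, b, c, d, b', a'} : Set V) := by
          have hNu : ∀ y, G.Adj b' y → y = b ∨ y = d ∨ y = a' :=
            nbr_class hcub hbb'.symm hdu.symm huv.symm hbd ha'b.symm ha'd.symm
          rintro x (rfl | rfl | rfl | rfl | rfl | rfl) y hy
          · rcases hNa y hy with rfl | rfl | rfl <;> simp
          · rcases hNb y hy with rfl | rfl | rfl <;> simp
          · rcases hNc y hy with rfl | rfl | rfl <;> simp
          · rcases hNd y hy with rfl | rfl | rfl <;> simp
          · rcases (nbr_class hcub hbb'.symm hdu.symm huv.symm hbd ha'b.symm ha'd.symm)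
              y hy with rfl | rfl | rfl <;> simp
          · rcases hNv y hy with rfl | rfl | rfl
            · simp
            · simp
            · rw [hwu]; simp
        have huniv := closed_eq_univ hG hcl
          (show a ∈ ({a, b, c, d, b', a'} : Set V) by simp)
        have huniv' : ∀ t : V, t = a ∨ t = c ∨ t = b' ∨ t = b ∨ t = d ∨ t = a' := by
          intro t
          have := huniv t
          simp only [Set.mem_insert_iff, Set.mem_singleton_iff] at this
          tauto
        exact absurd (build_K33 hab hda.symm haa' hbc.symm hcd hcv hbb'.symm hdu.symm
          huv.symm nac nau ncu nbd nbv ndv hac hb'a.symm hb'c.symm hbd ha'b.symm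
          ha'd.symm huniv') hK33
      · obtain ⟨x0, hux0, hx0b, hx0d⟩ := third_nbr hcub hbb'.symm hdu.symm hbd
        have hNu : ∀ y, G.Adj b' y → y = b ∨ y = d ∨ y = x0 :=
          nbr_class hcub hbb'.symm hdu.symm hux0 hbd hx0b.symm hx0d.symm
        have hx0a : x0 ≠ a := fun h => nau ((h ▸ hux0) : G.Adj b' a).symm
        have hx0c : x0 ≠ c := fun h => ncu ((h ▸ hux0) : G.Adj b' c).symm
        have hx0u : x0 ≠ b' := hux0.ne'
        have hx0v : x0 ≠ a' := by
          intro h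
          have hba : G.Adj b' a' := h ▸ hux0
          rcases hNv b' hba.symm with h' | h' | h'
          · exact hb'a h'
          · exact hb'c h'
          · exact hwu h'.symm
        have hwv : w ≠ a' := hvw.ne'
        by_cases hwx : w = x0
        · have hu_w : G.Adj b' w := by rw [hwx]; exact hux0
          obtain ⟨z, hwz, hzv, hzu⟩ := third_nbr hcub hvw.symm hu_w.symm hvu
          have hNw : ∀ y, G.Adj w y → y = a' ∨ y = b' ∨ y = z :=
            nbr_class hcub hvw.symm hu_w.symm hwz hvu hzv.symm hzu.symm
          have hza : z ≠ a := by
            rintro rfl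
            rcases hNa w hwz.symm with h | h | h
            · exact hwb h
            · exact hwd h
            · exact hwv h
          have hzb : z ≠ b := by
            rintro rfl
            rcases hNb w hwz.symm with h | h | h
            · exact hwa h
            · exact hwc h
            · exact hwu h
          have hzc : z ≠ c := by
            rintro rfl
            rcases hNc w hwz.symm with h | h | h
            · exact hwb h
            · exact hwd h
            · exact hwv h
          have hzd : z ≠ d := by
            rintro rfl
            rcases hNd w hwz.symm with h | h | h
            · exact hwc h
            · exact hwa h
            · exact hwu h
          have hzw : z ≠ w := hwz.ne'
          refine cutgood_of_subset_one (S := {a, b, c, d, a', b', w}) (s := a)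
            (t := z) (e1 := s(w, z)) (by simp)
            (by simp [hza, hzb, hzc, hzd, hzv, hzu, hzw]) ?_ (by omega)
          rintro e ⟨x, y, hadj, hxS, hyS, rfl⟩
          simp only [Set.mem_insert_iff, Set.mem_singleton_iff] at hxS hyS
          push_neg at hyS
          obtain ⟨hy1, hy2, hy3, hy4, hy5, hy6, hy7⟩ := hyS
          rcases hxS with rfl | rfl | rfl | rfl | rfl | rfl | rfl
          · rcases hNa y hadj with rfl | rfl | rfl
            · exact absurd rfl hy2
            · exact absurd rfl hy4
            · exact absurd rfl hy5
          · rcases hNb y hadj with rfl | rfl | rfl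
            · exact absurd rfl hy1
            · exact absurd rfl hy3
            · exact absurd rfl hy6
          · rcases hNc y hadj with rfl | rfl | rfl
            · exact absurd rfl hy2
            · exact absurd rfl hy4
            · exact absurd rfl hy5
          · rcases hNd y hadj with rfl | rfl | rfl
            · exact absurd rfl hy3
            · exact absurd rfl hy1
            · exact absurd rfl hy6
          · rcases hNv y hadj with rfl | rfl | rfl
            · exact absurd rfl hy1
            · exact absurd rfl hy3
            · exact absurd rfl hy7
          · rcases hNu y hadj with rfl | rfl | rfl
            · exact absurd rfl hy2
            · exact absurd rfl hy4
            · exact absurd hwx.symm hy7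
          · rcases hNw y hadj with rfl | rfl | rfl
            · exact absurd rfl hy5
            · exact absurd rfl hy6
            · rfl
        · refine cutgood_of_subset_two (S := {a, b, c, d, a', b'}) (s := a)
            (t := w) (e1 := s(a', w)) (e2 := s(b', x0)) (by simp)
            (by simp [hwa, hwb, hwc, hwd, hwv, hwu]) ?_
            (pair_disj hvu (fun h => hx0v (h.symm)) hwu hwx) (by omega)
          rintro e ⟨x, y, hadj, hxS, hyS, rfl⟩
          simp only [Set.mem_insert_iff, Set.mem_singleton_iff] at hxS hyS
          push_neg at hyS
          obtain ⟨hy1, hy2, hy3, hy4, hy5, hy6⟩ := hyS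
          rcases hxS with rfl | rfl | rfl | rfl | rfl | rfl
          · rcases hNa y hadj with rfl | rfl | rfl
            · exact absurd rfl hy2
            · exact absurd rfl hy4
            · exact absurd rfl hy5
          · rcases hNb y hadj with rfl | rfl | rfl
            · exact absurd rfl hy1
            · exact absurd rfl hy3
            · exact absurd rfl hy6
          · rcases hNc y hadj with rfl | rfl | rfl
            · exact absurd rfl hy2
            · exact absurd rfl hy4
            · exact absurd rfl hy5
          · rcases hNd y hadj with rfl | rfl | rfl
            · exact absurd rfl hy3
            · exact absurd rfl hy1
            · exact absurd rfl hy6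
          · rcases hNv y hadj with rfl | rfl | rfl
            · exact absurd rfl hy1
            · exact absurd rfl hy3
            · exact Or.inl rfl
          · rcases hNu y hadj with rfl | rfl | rfl
            · exact absurd rfl hy2
            · exact absurd rfl hy4
            · exact Or.inr rfl
    · exact fourcase hcub hab hbc hcd hda hac hbd hT haa' (by rw [h13]; exact hcc')
        hbb' hdd' h24 ha'b ha'd hb'a hb'c hd'a hd'c
  · by_cases h24 : b' = d'
    · exact fourcase hcub hbc hcd hda hab hbd hac.symm hT hbb' (by rw [h24]; exact hdd')
        hcc' haa' (fun h => h13 h.symm) hb'c hb'a hc'b hc'd ha'b ha'd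
    · -- four independent edges
      have ha'b' : a' ≠ b' := by
        intro h
        have : G.Adj b a' := by rw [h]; exact hbb'
        exact hT a b a' hab this haa'.symm
      have hb'c' : b' ≠ c' := by
        intro h
        have : G.Adj c b' := by rw [h]; exact hcc'
        exact hT b c b' hbc this hbb'.symm
      have hc'd' : c' ≠ d' := by
        intro h
        have : G.Adj d c' := by rw [h]; exact hdd'
        exact hT c d c' hcd this hcc'.symm
      have hd'a' : d' ≠ a' := by
        intro h
        have : G.Adj a d' := by rw [h]; exact haa'
        exact hT d a d' hda this hdd'.symm
      have hNa : ∀ y, G.Adj a y → y = b ∨ y = d ∨ y = a' :=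
        nbr_class hcub hab hda.symm haa' hbd ha'b.symm ha'd.symm
      have hNb : ∀ y, G.Adj b y → y = a ∨ y = c ∨ y = b' :=
        nbr_class hcub hab.symm hbc hbb' hac hb'a.symm hb'c.symm
      have hNc : ∀ y, G.Adj c y → y = b ∨ y = d ∨ y = c' :=
        nbr_class hcub hbc.symm hcd hcc' hbd hc'b.symm hc'd.symm
      have hNd : ∀ y, G.Adj d y → y = c ∨ y = a ∨ y = d' :=
        nbr_class hcub hcd.symm hda hdd' hac.symm hd'c.symm hd'a.symm
      refine cutgood_of_subset_four (S := {a, b, c, d}) (s := a) (t := a')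
        (e1 := s(a, a')) (e2 := s(b, b')) (e3 := s(c, c')) (e4 := s(d, d'))
        (by simp) (by simp [haa'.ne', ha'b, ha'c, ha'd]) ?_
        (pair_disj hab.ne hb'a.symm.symm.symm ha'b ha'b')
        (pair_disj hac hc'a.symm.symm.symm ha'c h13)
        (pair_disj hda.ne' hd'a.symm.symm.symm ha'd (fun h => hd'a' h.symm))
        (pair_disj hbc.ne hc'b.symm.symm.symm hb'c hb'c')
        (pair_disj hbd hd'b.symm.symm.symm hb'd h24)
        (pair_disj hcd.ne hd'c.symm.symm.symm hc'd hc'd')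
      rintro e ⟨x, y, hadj, hxS, hyS, rfl⟩
      simp only [Set.mem_insert_iff, Set.mem_singleton_iff] at hxS hyS
      push_neg at hyS
      obtain ⟨hy1, hy2, hy3, hy4⟩ := hyS
      rcases hxS with rfl | rfl | rfl | rfl
      · rcases hNa y hadj with rfl | rfl | rfl
        · exact absurd rfl hy2
        · exact absurd rfl hy4
        · exact Or.inl rfl
      · rcases hNb y hadj with rfl | rfl | rfl
        · exact absurd rfl hy1
        · exact absurd rfl hy3
        · exact Or.inr (Or.inl rfl)
      · rcases hNc y hadj with rfl | rfl | rfl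
        · exact absurd rfl hy2
        · exact absurd rfl hy4
        · exact Or.inr (Or.inr (Or.inl rfl))
      · rcases hNd y hadj with rfl | rfl | rfl
        · exact absurd rfl hy3
        · exact absurd rfl hy1
        · exact Or.inr (Or.inr (Or.inr rfl))

end G4M

section Assemble
open SimpleGraph Walk

variable {V : Type*} {G : SimpleGraph V}

lemma tri_cycle {x y z : V} (h1 : G.Adj x y) (h2 : G.Adj y z) (h3 : G.Adj z x) :
    ∃ (c : G.Walk x x), c.IsCycle ∧ c.length = 3 := by
  refine ⟨Walk.cons h1 (Walk.cons h2 (Walk.cons h3 Walk.nil)), ?_, by simp⟩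
  rw [cons_isCycle_iff]
  constructor
  · rw [cons_isPath_iff, cons_isPath_iff]
    simp [h1.ne', h2.ne, h3.ne]
  · simp only [edges_cons, edges_nil, List.mem_cons, List.not_mem_nil, or_false]
    push_neg
    constructor
    · intro h
      rcases Sym2.eq_iff.mp h with ⟨ha, hb⟩ | ⟨ha, hb⟩
      · exact h1.ne ha
      · exact h3.ne' ha
    · intro h
      rcases Sym2.eq_iff.mp h with ⟨ha, hb⟩ | ⟨ha, hb⟩
      · exact h3.ne ha.symm
      · exact h2.ne hb

lemma walk3 {a : V} (w : G.Walk a a) (h3 : w.length = 3) :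
    ∃ (b c : V) (hab : G.Adj a b) (hbc : G.Adj b c) (hca : G.Adj c a),
      w.support = [a, b, c, a] := by
  cases w with
  | nil => simp at h3
  | cons h p =>
    cases p with
    | nil => simp at h3
    | cons h2 p2 =>
      cases p2 with
      | nil => simp at h3
      | cons h3' p3 =>
        cases p3 with
        | nil => exact ⟨_, _, h, h2, h3', by simp⟩
        | cons h4 p4 => simp [Walk.length_cons] at h3

lemma walk4 {a : V} (w : G.Walk a a) (h4 : w.length = 4) :
    ∃ (b c d : V) (hab : G.Adj a b) (hbc : G.Adj b c) (hcd : G.Adj c d)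
      (hda : G.Adj d a), w.support = [a, b, c, d, a] := by
  cases w with
  | nil => simp at h4
  | cons h p =>
    cases p with
    | nil => simp at h4
    | cons h2 p2 =>
      cases p2 with
      | nil => simp at h4
      | cons h3' p3 =>
        cases p3 with
        | nil => simp at h4
        | cons h4' p4 =>
          cases p4 with
          | nil => exact ⟨_, _, _, h, h2, h3', h4', by simp⟩
          | cons h5 p5 => simp [Walk.length_cons] at h4

lemma not_acyclic [Fintype V] (hcub : IsCubic G) (hG : G.Connected) :
    ¬ G.IsAcyclic := by
  classical
  intro hacyc
  have htree : G.IsTree := ⟨hG, hacyc⟩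
  have hcard := htree.card_edgeFinset
  have hdeg : ∀ v : V, G.degree v = 3 := by
    intro v
    rw [← card_neighborFinset_eq_degree, neighborFinset_def,
      ← Set.ncard_eq_toFinset_card']
    exact hcub v
  have hsum := G.sum_degrees_eq_twice_card_edges
  rw [Finset.sum_congr rfl (fun v _ => hdeg v), Finset.sum_const, smul_eq_mul] at hsum
  simp only [Finset.card_univ] at hsum
  have hpos : 1 ≤ Fintype.card V := Fintype.card_pos_iff.mpr hG.nonempty
  omega
end Assemble

end CrackerAux

/-- every connected cubic graph other than K4 and K_{3,3} contains a
cracker of size at most the girth. -/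
theorem cracker_le_girth {V : Type*} [Fintype V] (G : SimpleGraph V)
    (hG : G.Connected) (hcub : IsCubic G)
    (hK4 : ¬ Nonempty (G ≃g completeGraph (Fin 4)))
    (hK33 : ¬ Nonempty (G ≃g completeBipartiteGraph (Fin 3) (Fin 3))) :
    ∃ C : Set (Sym2 V), IsCracker G C ∧ (C.ncard : ℕ∞) ≤ G.egirth := by
  classical
  have hncyc := not_acyclic hcub hG
  obtain ⟨a, w, hw, hgl⟩ := exists_egirth_eq_length.mpr hncyc
  have hmin : ∀ (u : V) (c : G.Walk u u), c.IsCycle → w.length ≤ c.length := by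
    intro u c hc
    have h := le_egirth.mp le_rfl u c hc
    rw [hgl] at h
    exact_mod_cast h
  have hg3 : 3 ≤ w.length := hw.three_le_length
  have hCG : CutGood G w.length := by
    by_cases hg5 : 5 ≤ w.length
    · obtain ⟨S, s, t, h1, h2, h3, h4⟩ := case_ge5 hcub hw hmin hg5
      exact ⟨S, s, t, h1, h2, h3, h4⟩
    · by_cases hg4 : w.length = 4
      · obtain ⟨b, c, d, hab, hbc, hcd, hda, hsup⟩ := walk4 w hg4
        have hnd := hw.support_nodup
        rw [hsup] at hnd
        simp only [List.tail_cons, List.nodup_cons, List.mem_cons,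
          List.not_mem_nil, List.mem_singleton, List.nodup_nil, or_false,
          not_or, and_true] at hnd
        have hac : a ≠ c := fun h => hnd.2.1.2 h.symm
        have hbd : b ≠ d := hnd.1.2.1
        have hT : ∀ x y z : V, G.Adj x y → G.Adj y z → G.Adj z x → False := by
          intro x y z hxy hyz hzx
          obtain ⟨cc, hcc, hlen⟩ := tri_cycle hxy hyz hzx
          have := hmin _ _ hcc
          omega
        obtain ⟨S, s, t, h1, h2, h3, h4⟩ :=
          case_g4 hcub hG hK33 hab hbc hcd hda hac hbd hT
        exact ⟨S, s, t, h1, h2, h3, by omega⟩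
      · have hg3' : w.length = 3 := by omega
        obtain ⟨b, c, hab, hbc, hca, hsup⟩ := walk3 w hg3'
        obtain ⟨S, s, t, h1, h2, h3, h4⟩ := case_g3 hcub hG hK4 hab hbc hca
        exact ⟨S, s, t, h1, h2, h3, by omega⟩
  obtain ⟨S, s, t, hs, ht, hpair, hcard⟩ := hCG
  have hdis := xcut_disconnects (G := G) hs ht
  obtain ⟨C, hCsub, hCcr⟩ := extract_cracker hG (xcut G S).ncard (xcut G S) le_rfl
    (xcut_subset_edgeSet S) hpair hdis
  refine ⟨C, hCcr, ?_⟩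
  rw [hgl]
  have h1 : C.ncard ≤ (xcut G S).ncard := Set.ncard_le_ncard hCsub (Set.toFinite _)
  exact_mod_cast h1.trans hcard
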